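/- Let k be a field, let M, N be positive integers, and let u, v, w ∈ ℤ² be such that u, v form a ℤ-basis of ℤ². Let P = {w + s·u + t·v : s, t ∈ ℝ, 0 ≤ s ≤ M, 0 ≤ t ≤ N} ⊂ ℝ². Suppose f ∈ k[x,y] is a polynomial, write c_q for the coefficient in f of the monomial x^{q₁}·y^{q₂} for q = (q₁,q₂) ∈ ℤ², and assume: (i) every (i,j) with c_{(i,j)} ≠ 0 lies in P ∩ ℤ², and neither x nor y divides f; (ii) c_{w + t·v} = 0 for all integers t with 0 ≤ t ≤ N−1, and c_{w + N·v + s·u} = 0 for all integers s with 1 ≤ s ≤ M; (iii) c_{w + u} ≠ 0 and c_{w + N·v} ≠ 0. Then f is irreducible in k[x,y]. -/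

import Mathlib

open MvPolynomial Finset

/-- The coefficient of the monomial `x^{q₁} y^{q₂}` in `f ∈ k[x,y]`, for `q = (q₁, q₂) ∈ ℤ²`
(it is `0` when `q` has a negative entry). Here `X 0` plays the role of `x` and `X 1` of `y`. -/
noncomputable def coeffZ {k : Type*} [CommSemiring k] (f : MvPolynomial (Fin 2) k)
    (q : ℤ × ℤ) : k :=
  if 0 ≤ q.1 ∧ 0 ≤ q.2 then
    MvPolynomial.coeff (Finsupp.single 0 q.1.toNat + Finsupp.single 1 q.2.toNat) f
  else 0

namespace Stmt7Aux

/-- Integer weight of a monomial exponent. -/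
def wt (c0 c1 : ℤ) (m : Fin 2 →₀ ℕ) : ℤ := c0 * (m 0) + c1 * (m 1)

lemma wt_add (c0 c1 : ℤ) (a b : Fin 2 →₀ ℕ) :
    wt c0 c1 (a + b) = wt c0 c1 a + wt c0 c1 b := by
  simp only [wt, Finsupp.add_apply]
  push_cast
  ring

lemma wt_neg (c0 c1 : ℤ) (m : Fin 2 →₀ ℕ) : wt (-c0) (-c1) m = -wt c0 c1 m := by
  simp only [wt]; ring

lemma fin2_eq (m : Fin 2 →₀ ℕ) :
    m = Finsupp.single 0 (m 0) + Finsupp.single 1 (m 1) := by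
  ext i
  fin_cases i <;> simp [Finsupp.single_apply]

set_option linter.unusedSectionVars false

variable {k : Type*} [CommRing k] [IsDomain k]

/-- The face of `p` at weight-level `d`. -/
noncomputable def faceAt (c0 c1 d : ℤ) (p : MvPolynomial (Fin 2) k) : MvPolynomial (Fin 2) k :=
  ∑ m ∈ p.support.filter (fun m => wt c0 c1 m = d), monomial m (coeff m p)

lemma coeff_faceAt (c0 c1 d : ℤ) (p : MvPolynomial (Fin 2) k) (n : Fin 2 →₀ ℕ) :
    coeff n (faceAt c0 c1 d p) = if wt c0 c1 n = d then coeff n p else 0 := by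
  classical
  unfold faceAt
  rw [coeff_sum]
  simp only [coeff_monomial]
  rw [Finset.sum_ite_eq' (p.support.filter (fun m => wt c0 c1 m = d)) n (fun m => coeff m p)]
  simp only [Finset.mem_filter, mem_support_iff]
  by_cases h1 : wt c0 c1 n = d
  · by_cases h2 : coeff n p = 0 <;> simp [h1, h2]
  · simp [h1]

lemma faceAt_neg (c0 c1 d : ℤ) (p : MvPolynomial (Fin 2) k) :
    faceAt (-c0) (-c1) (-d) p = faceAt c0 c1 d p := by
  ext n
  rw [coeff_faceAt, coeff_faceAt, wt_neg]
  simp [neg_inj]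

lemma mem_support_faceAt {c0 c1 d : ℤ} {p : MvPolynomial (Fin 2) k} {n : Fin 2 →₀ ℕ}
    (hn : n ∈ (faceAt c0 c1 d p).support) : n ∈ p.support ∧ wt c0 c1 n = d := by
  rw [mem_support_iff, coeff_faceAt] at hn
  split_ifs at hn with h
  · exact ⟨mem_support_iff.2 hn, h⟩
  · exact absurd rfl hn

lemma faceAt_ne_zero {c0 c1 d : ℤ} {p : MvPolynomial (Fin 2) k} {m : Fin 2 →₀ ℕ}
    (hm : m ∈ p.support) (hd : wt c0 c1 m = d) : faceAt c0 c1 d p ≠ 0 := by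
  intro h
  rw [mem_support_iff] at hm
  apply hm
  have := coeff_faceAt c0 c1 d p m
  rw [h, if_pos hd] at this
  simpa using this.symm

lemma faceAt_eq_self {c0 c1 d : ℤ} {p : MvPolynomial (Fin 2) k}
    (h : ∀ n ∈ p.support, wt c0 c1 n = d) : faceAt c0 c1 d p = p := by
  ext n
  rw [coeff_faceAt]
  split_ifs with h1
  · rfl
  · by_cases h2 : n ∈ p.support
    · exact absurd (h n h2) h1
    · rw [mem_support_iff, not_not] at h2
      exact h2.symm

/-- Lower bound on weights of the support of a product. -/
lemma wt_mul_lower {c0 c1 dg dh : ℤ} {g h : MvPolynomial (Fin 2) k}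
    (hg : ∀ n ∈ g.support, dg ≤ wt c0 c1 n) (hh : ∀ n ∈ h.support, dh ≤ wt c0 c1 n) :
    ∀ n ∈ (g * h).support, dg + dh ≤ wt c0 c1 n := by
  classical
  intro n hn
  rw [mem_support_iff, coeff_mul] at hn
  obtain ⟨x, hx, hx0⟩ := Finset.exists_ne_zero_of_sum_ne_zero hn
  rw [Finset.HasAntidiagonal.mem_antidiagonal] at hx
  have h1 : dg ≤ wt c0 c1 x.1 := hg _ (mem_support_iff.2 fun h => hx0 (by rw [h, zero_mul]))
  have h2 : dh ≤ wt c0 c1 x.2 := hh _ (mem_support_iff.2 fun h => hx0 (by rw [h, mul_zero]))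
  calc dg + dh ≤ wt c0 c1 x.1 + wt c0 c1 x.2 := add_le_add h1 h2
    _ = wt c0 c1 n := by rw [← wt_add, hx]

/-- The minimal face of a product is the product of the minimal faces. -/
lemma faceAt_mul {c0 c1 dg dh : ℤ} {g h : MvPolynomial (Fin 2) k}
    (hg : ∀ n ∈ g.support, dg ≤ wt c0 c1 n) (hh : ∀ n ∈ h.support, dh ≤ wt c0 c1 n) :
    faceAt c0 c1 (dg + dh) (g * h) = faceAt c0 c1 dg g * faceAt c0 c1 dh h := by
  classical
  ext n
  rw [coeff_faceAt, coeff_mul, coeff_mul]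
  by_cases hn : wt c0 c1 n = dg + dh
  · rw [if_pos hn]
    refine Finset.sum_congr rfl fun x hx => ?_
    rw [Finset.HasAntidiagonal.mem_antidiagonal] at hx
    have hsum : wt c0 c1 x.1 + wt c0 c1 x.2 = dg + dh := by rw [← wt_add, hx, hn]
    rw [coeff_faceAt, coeff_faceAt]
    by_cases e1 : wt c0 c1 x.1 = dg
    · have e2 : wt c0 c1 x.2 = dh := by omega
      rw [if_pos e1, if_pos e2]
    · rw [if_neg e1, zero_mul]
      by_cases hg1 : coeff x.1 g = 0
      · rw [hg1, zero_mul]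
      · have w1 := hg _ (mem_support_iff.2 hg1)
        have : coeff x.2 h = 0 := by
          by_contra hc
          exact absurd (hh _ (mem_support_iff.2 hc)) (by omega)
        rw [this, mul_zero]
  · rw [if_neg hn]
    symm
    apply Finset.sum_eq_zero
    intro x hx
    rw [Finset.HasAntidiagonal.mem_antidiagonal] at hx
    rw [coeff_faceAt, coeff_faceAt]
    by_cases e1 : wt c0 c1 x.1 = dg
    · by_cases e2 : wt c0 c1 x.2 = dh
      · exact absurd (by rw [← hx, wt_add, e1, e2]) hn
      · rw [if_neg e2, mul_zero]
    · rw [if_neg e1, zero_mul]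

lemma exists_wt_min (c0 c1 : ℤ) {p : MvPolynomial (Fin 2) k} (hp : p ≠ 0) :
    ∃ m ∈ p.support, ∀ n ∈ p.support, wt c0 c1 m ≤ wt c0 c1 n :=
  Finset.exists_min_image p.support (wt c0 c1)
    (Finset.nonempty_iff_ne_empty.2 (fun h => hp (support_eq_empty.1 h)))

/-- Attainment: there is a support element of `g*h` at the minimal total level. -/
lemma exists_wt_min_mul {c0 c1 : ℤ} {g h : MvPolynomial (Fin 2) k}
    {mg mh : Fin 2 →₀ ℕ} (hmg : mg ∈ g.support) (hming : ∀ n ∈ g.support, wt c0 c1 mg ≤ wt c0 c1 n)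
    (hmh : mh ∈ h.support) (hminh : ∀ n ∈ h.support, wt c0 c1 mh ≤ wt c0 c1 n) :
    ∃ m ∈ (g * h).support, wt c0 c1 m = wt c0 c1 mg + wt c0 c1 mh := by
  classical
  have hG : faceAt c0 c1 (wt c0 c1 mg) g ≠ 0 := faceAt_ne_zero hmg rfl
  have hH : faceAt c0 c1 (wt c0 c1 mh) h ≠ 0 := faceAt_ne_zero hmh rfl
  have hGH := mul_ne_zero hG hH
  rw [← faceAt_mul hming hminh] at hGH
  obtain ⟨n, hn⟩ := ne_zero_iff.1 hGH
  rw [coeff_faceAt] at hn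
  split_ifs at hn with hd
  · exact ⟨n, mem_support_iff.2 hn, hd⟩
  · exact absurd rfl hn


def sig (a b : ℤ) (q : ℤ × ℤ) : ℤ := a * q.1 + b * q.2

lemma sig_add (a b : ℤ) (q q' : ℤ × ℤ) : sig a b (q + q') = sig a b q + sig a b q' := by
  simp only [sig, Prod.fst_add, Prod.snd_add]; ring

lemma sig_smul (a b c : ℤ) (q : ℤ × ℤ) : sig a b (c • q) = c * sig a b q := by
  simp only [sig, Prod.smul_fst, Prod.smul_snd, smul_eq_mul]; ring

def expE (m : Fin 2 →₀ ℕ) : ℤ × ℤ := ((m 0 : ℤ), (m 1 : ℤ))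

lemma wt_sig (a b : ℤ) (m : Fin 2 →₀ ℕ) : wt a b m = sig a b (expE m) := rfl

lemma expE_inj {m n : Fin 2 →₀ ℕ} (h : expE m = expE n) : m = n := by
  have h0 : ((m 0 : ℤ)) = (n 0 : ℤ) := congrArg Prod.fst h
  have h1 : ((m 1 : ℤ)) = (n 1 : ℤ) := congrArg Prod.snd h
  ext i
  fin_cases i
  · exact_mod_cast h0
  · exact_mod_cast h1

lemma monomial_fin2 {k : Type*} [CommSemiring k] (m : Fin 2 →₀ ℕ) (a : k) :
    monomial m a = X 0 ^ (m 0) * (X 1 ^ (m 1) * C a) := by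
  have h1 : (monomial (Finsupp.single 1 (m 1)) a : MvPolynomial (Fin 2) k)
      = X 1 ^ (m 1) * C a := by
    rw [← add_zero (Finsupp.single 1 (m 1)), monomial_single_add, monomial_zero']
  conv_lhs => rw [fin2_eq m]
  rw [monomial_single_add, h1]

@[simp] lemma wt_zero (a b : ℤ) : wt a b 0 = 0 := by simp [wt]

end Stmt7Aux


open Stmt7Aux in
set_option maxHeartbeats 1600000 in
theorem stmt_7 (k : Type*) [Field k] (M N : ℕ) (hM : 0 < M) (hN : 0 < N)
    (u v w : ℤ × ℤ)
    (hbasis : Function.Bijective (fun st : ℤ × ℤ => st.1 • u + st.2 • v))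
    (f : MvPolynomial (Fin 2) k)
    -- (i) the Newton polygon of `f` is contained in the parallelogram
    -- `P = {w + s·u + t·v : 0 ≤ s ≤ M, 0 ≤ t ≤ N}`, and neither `x` nor `y` divides `f`
    (hsupp : ∀ i j : ℕ, MvPolynomial.coeff (Finsupp.single 0 i + Finsupp.single 1 j) f ≠ 0 →
      ∃ s t : ℝ, 0 ≤ s ∧ s ≤ M ∧ 0 ≤ t ∧ t ≤ N ∧
        ((i : ℝ), (j : ℝ)) =
          ((w.1 : ℝ) + s * (u.1 : ℝ) + t * (v.1 : ℝ),
           (w.2 : ℝ) + s * (u.2 : ℝ) + t * (v.2 : ℝ)))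
    (hx : ¬ (X 0 : MvPolynomial (Fin 2) k) ∣ f)
    (hy : ¬ (X 1 : MvPolynomial (Fin 2) k) ∣ f)
    -- (iii)
    (hc1 : ∀ t : ℤ, 0 ≤ t → t ≤ (N : ℤ) - 1 → coeffZ f (w + t • v) = 0)
    (hc2 : ∀ s : ℤ, 1 ≤ s → s ≤ (M : ℤ) → coeffZ f (w + (N : ℤ) • v + s • u) = 0)
    -- (iv)
    (hu : coeffZ f (w + u) ≠ 0)
    (hv : coeffZ f (w + (N : ℤ) • v) ≠ 0) :
    Irreducible f := by
  classical
  obtain ⟨pp, hp⟩ := hbasis.2 (1, 0)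
  obtain ⟨rr, hr⟩ := hbasis.2 (0, 1)
  simp only at hp hr
  have hp1 : pp.1 * u.1 + pp.2 * v.1 = 1 := by
    have h := congrArg Prod.fst hp; simpa [smul_eq_mul] using h
  have hp2 : pp.1 * u.2 + pp.2 * v.2 = 0 := by
    have h := congrArg Prod.snd hp; simpa [smul_eq_mul] using h
  have hr1 : rr.1 * u.1 + rr.2 * v.1 = 0 := by
    have h := congrArg Prod.fst hr; simpa [smul_eq_mul] using h
  have hr2 : rr.1 * u.2 + rr.2 * v.2 = 1 := by
    have h := congrArg Prod.snd hr; simpa [smul_eq_mul] using h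
  -- linear coordinates σ = sig pp.1 rr.1, τ = sig pp.2 rr.2
  have hrepr : ∀ q : ℤ × ℤ, sig pp.1 rr.1 q • u + sig pp.2 rr.2 q • v = q := by
    intro q
    have e1 : sig pp.1 rr.1 q * u.1 + sig pp.2 rr.2 q * v.1 = q.1 := by
      simp only [sig]; linear_combination q.1 * hp1 + q.2 * hr1
    have e2 : sig pp.1 rr.1 q * u.2 + sig pp.2 rr.2 q * v.2 = q.2 := by
      simp only [sig]; linear_combination q.1 * hp2 + q.2 * hr2
    have : (sig pp.1 rr.1 q • u + sig pp.2 rr.2 q • v).1 = q.1 ∧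
        (sig pp.1 rr.1 q • u + sig pp.2 rr.2 q • v).2 = q.2 := by
      constructor
      · simpa [smul_eq_mul] using e1
      · simpa [smul_eq_mul] using e2
    exact Prod.ext this.1 this.2
  have hbu : ((sig pp.1 rr.1 u : ℤ), (sig pp.2 rr.2 u : ℤ)) = ((1 : ℤ), (0 : ℤ)) := by
    apply hbasis.1
    simp only
    rw [hrepr u]
    simp
  have hbv : ((sig pp.1 rr.1 v : ℤ), (sig pp.2 rr.2 v : ℤ)) = ((0 : ℤ), (1 : ℤ)) := by
    apply hbasis.1
    simp only
    rw [hrepr v]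
    simp
  have hσu : sig pp.1 rr.1 u = 1 := congrArg Prod.fst hbu
  have hτu : sig pp.2 rr.2 u = 0 := congrArg Prod.snd hbu
  have hσv : sig pp.1 rr.1 v = 0 := congrArg Prod.fst hbv
  have hτv : sig pp.2 rr.2 v = 1 := congrArg Prod.snd hbv
  have hinj : ∀ q q' : ℤ × ℤ, sig pp.1 rr.1 q = sig pp.1 rr.1 q' →
      sig pp.2 rr.2 q = sig pp.2 rr.2 q' → q = q' := by
    intro q q' h1 h2
    rw [← hrepr q, ← hrepr q', h1, h2]
  -- coefficient translation
  have hcz : ∀ m : Fin 2 →₀ ℕ, coeffZ f (expE m) = coeff m f := by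
    intro m
    have hpos : (0 : ℤ) ≤ (expE m).1 ∧ (0 : ℤ) ≤ (expE m).2 :=
      ⟨Int.natCast_nonneg _, Int.natCast_nonneg _⟩
    rw [coeffZ, if_pos hpos]
    show coeff (Finsupp.single 0 (((m 0 : ℤ)).toNat) + Finsupp.single 1 (((m 1 : ℤ)).toNat)) f = _
    rw [Int.toNat_natCast, Int.toNat_natCast, ← fin2_eq]
  have mk : ∀ q : ℤ × ℤ, coeffZ f q ≠ 0 → ∃ m, coeff m f ≠ 0 ∧ expE m = q := by
    intro q hq
    by_cases h : 0 ≤ q.1 ∧ 0 ≤ q.2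
    · refine ⟨Finsupp.single 0 q.1.toNat + Finsupp.single 1 q.2.toNat, ?_, ?_⟩
      · rw [coeffZ, if_pos h] at hq; exact hq
      · have e0 : (Finsupp.single 0 q.1.toNat + Finsupp.single 1 q.2.toNat : Fin 2 →₀ ℕ) 0
            = q.1.toNat := by simp
        have e1 : (Finsupp.single 0 q.1.toNat + Finsupp.single 1 q.2.toNat : Fin 2 →₀ ℕ) 1
            = q.2.toNat := by simp
        rw [expE, e0, e1]
        exact Prod.ext (by simpa using Int.toNat_of_nonneg h.1)
          (by simpa using Int.toNat_of_nonneg h.2)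
    · exfalso; apply hq; rw [coeffZ, if_neg h]
  obtain ⟨m1, hm1c, hm1E⟩ := mk _ hu
  obtain ⟨m2, hm2c, hm2E⟩ := mk _ hv
  have hm1s : m1 ∈ f.support := mem_support_iff.2 hm1c
  have hm2s : m2 ∈ f.support := mem_support_iff.2 hm2c
  have hf0 : f ≠ 0 := fun h => hm1c (by rw [h]; simp)
  have hm12 : m1 ≠ m2 := by
    intro he
    have h1 : w + u = w + (N : ℤ) • v := by rw [← hm1E, ← hm2E, he]
    have huv : u = (N : ℤ) • v := by
      have := add_left_cancel h1; exact this
    have h10 : ((1 : ℤ), (0 : ℤ)) = ((0 : ℤ), (N : ℤ)) := by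
      apply hbasis.1
      simp only
      rw [one_smul, zero_smul, zero_smul, add_zero, zero_add, huv]
    have : (1 : ℤ) = 0 := congrArg Prod.fst h10
    norm_num at this
  have hm12' : m2 ≠ m1 := fun e => hm12 e.symm
  -- σ τ values at m1 m2
  have hσm1 : sig pp.1 rr.1 (expE m1) = sig pp.1 rr.1 w + 1 := by
    rw [hm1E, sig_add, hσu]
  have hτm1 : sig pp.2 rr.2 (expE m1) = sig pp.2 rr.2 w := by
    rw [hm1E, sig_add, hτu, add_zero]
  have hσm2 : sig pp.1 rr.1 (expE m2) = sig pp.1 rr.1 w := by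
    rw [hm2E, sig_add, sig_smul, hσv, mul_zero, add_zero]
  have hτm2 : sig pp.2 rr.2 (expE m2) = sig pp.2 rr.2 w + (N : ℤ) := by
    rw [hm2E, sig_add, sig_smul, hτv, mul_one]
  -- support bounds
  have hST : ∀ m ∈ f.support,
      sig pp.1 rr.1 w ≤ sig pp.1 rr.1 (expE m) ∧
      sig pp.1 rr.1 (expE m) ≤ sig pp.1 rr.1 w + (M : ℤ) ∧
      sig pp.2 rr.2 w ≤ sig pp.2 rr.2 (expE m) ∧
      sig pp.2 rr.2 (expE m) ≤ sig pp.2 rr.2 w + (N : ℤ) := by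
    intro m hm
    rw [mem_support_iff] at hm
    have hscoef : coeff (Finsupp.single 0 (m 0) + Finsupp.single 1 (m 1)) f ≠ 0 := by
      rw [← fin2_eq]; exact hm
    obtain ⟨s, t, hs0, hsM, ht0, htN, heq⟩ := hsupp (m 0) (m 1) hscoef
    have h1 : ((m 0 : ℕ) : ℝ) = (w.1 : ℝ) + s * u.1 + t * v.1 := congrArg Prod.fst heq
    have h2 : ((m 1 : ℕ) : ℝ) = (w.2 : ℝ) + s * u.2 + t * v.2 := congrArg Prod.snd heq
    have zu1 : pp.1 * u.1 + rr.1 * u.2 = 1 := hσu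
    have zv1 : pp.1 * v.1 + rr.1 * v.2 = 0 := hσv
    have zu2 : pp.2 * u.1 + rr.2 * u.2 = 0 := hτu
    have zv2 : pp.2 * v.1 + rr.2 * v.2 = 1 := hτv
    have cu1 : (pp.1 : ℝ) * u.1 + (rr.1 : ℝ) * u.2 = 1 := by exact_mod_cast zu1
    have cv1 : (pp.1 : ℝ) * v.1 + (rr.1 : ℝ) * v.2 = 0 := by exact_mod_cast zv1
    have cu2 : (pp.2 : ℝ) * u.1 + (rr.2 : ℝ) * u.2 = 0 := by exact_mod_cast zu2
    have cv2 : (pp.2 : ℝ) * v.1 + (rr.2 : ℝ) * v.2 = 1 := by exact_mod_cast zv2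
    have hsval : s = ((sig pp.1 rr.1 (expE m) - sig pp.1 rr.1 w : ℤ) : ℝ) := by
      have expand : ((sig pp.1 rr.1 (expE m) - sig pp.1 rr.1 w : ℤ) : ℝ) =
          (pp.1 : ℝ) * (((m 0 : ℕ) : ℝ) - (w.1 : ℝ)) +
          (rr.1 : ℝ) * (((m 1 : ℕ) : ℝ) - (w.2 : ℝ)) := by
        have e : sig pp.1 rr.1 (expE m) - sig pp.1 rr.1 w =
            pp.1 * ((m 0 : ℤ) - w.1) + rr.1 * ((m 1 : ℤ) - w.2) := by
          simp only [sig, expE]; ring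
        rw [e]; push_cast; ring
      rw [expand, h1, h2]
      linear_combination (-s) * cu1 + (-t) * cv1
    have htval : t = ((sig pp.2 rr.2 (expE m) - sig pp.2 rr.2 w : ℤ) : ℝ) := by
      have expand : ((sig pp.2 rr.2 (expE m) - sig pp.2 rr.2 w : ℤ) : ℝ) =
          (pp.2 : ℝ) * (((m 0 : ℕ) : ℝ) - (w.1 : ℝ)) +
          (rr.2 : ℝ) * (((m 1 : ℕ) : ℝ) - (w.2 : ℝ)) := by
        have e : sig pp.2 rr.2 (expE m) - sig pp.2 rr.2 w =
            pp.2 * ((m 0 : ℤ) - w.1) + rr.2 * ((m 1 : ℤ) - w.2) := by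
          simp only [sig, expE]; ring
        rw [e]; push_cast; ring
      rw [expand, h1, h2]
      linear_combination (-s) * cu2 + (-t) * cv2
    rw [hsval] at hs0 hsM
    rw [htval] at ht0 htN
    have b1 : (0 : ℤ) ≤ sig pp.1 rr.1 (expE m) - sig pp.1 rr.1 w := by exact_mod_cast hs0
    have b2 : sig pp.1 rr.1 (expE m) - sig pp.1 rr.1 w ≤ (M : ℤ) := by exact_mod_cast hsM
    have b3 : (0 : ℤ) ≤ sig pp.2 rr.2 (expE m) - sig pp.2 rr.2 w := by exact_mod_cast ht0
    have b4 : sig pp.2 rr.2 (expE m) - sig pp.2 rr.2 w ≤ (N : ℤ) := by exact_mod_cast htN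
    omega
  -- the vanishing conditions
  have hzero1 : ∀ m ∈ f.support, sig pp.1 rr.1 (expE m) = sig pp.1 rr.1 w → m = m2 := by
    intro m hm h0
    obtain ⟨_, _, ht0, htN⟩ := hST m hm
    have hEm : expE m = w + (sig pp.2 rr.2 (expE m) - sig pp.2 rr.2 w) • v := by
      apply hinj
      · rw [sig_add, sig_smul, hσv, mul_zero, add_zero, h0]
      · rw [sig_add, sig_smul, hτv, mul_one]; ring
    by_cases hlt : sig pp.2 rr.2 (expE m) - sig pp.2 rr.2 w ≤ (N : ℤ) - 1
    · exfalso
      have h3 := hc1 _ (by omega) hlt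
      rw [← hEm, hcz] at h3
      exact (mem_support_iff.1 hm) h3
    · apply expE_inj
      have ht : sig pp.2 rr.2 (expE m) - sig pp.2 rr.2 w = (N:ℤ) := by omega
      rw [hEm, ht, hm2E]
  have hzero2 : ∀ m ∈ f.support,
      sig pp.2 rr.2 (expE m) = sig pp.2 rr.2 w + (N : ℤ) → m = m2 := by
    intro m hm hτN
    obtain ⟨hs0, hsM, _, _⟩ := hST m hm
    by_cases hs1 : 1 ≤ sig pp.1 rr.1 (expE m) - sig pp.1 rr.1 w
    · exfalso
      have hEm : expE m = w + (N : ℤ) • v + (sig pp.1 rr.1 (expE m) - sig pp.1 rr.1 w) • u := by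
        apply hinj
        · rw [sig_add, sig_add, sig_smul, sig_smul, hσv, hσu]; ring
        · rw [sig_add, sig_add, sig_smul, sig_smul, hτv, hτu]; omega
      have h3 := hc2 _ hs1 (by omega)
      rw [← hEm, hcz] at h3
      exact (mem_support_iff.1 hm) h3
    · exact hzero1 m hm (by omega)
  have hone : ∀ m ∈ f.support, sig pp.1 rr.1 (expE m) = sig pp.1 rr.1 w + 1 →
      sig pp.2 rr.2 (expE m) = sig pp.2 rr.2 w → m = m1 := by
    intro m _ h1 h2
    apply expE_inj
    apply hinj
    · rw [h1, hσm1]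
    · rw [h2, hτm1]
  -- the weight wL = N·σ + τ
  have hwL : ∀ m : Fin 2 →₀ ℕ, wt ((N : ℤ) * pp.1 + pp.2) ((N : ℤ) * rr.1 + rr.2) m =
      (N : ℤ) * sig pp.1 rr.1 (expE m) + sig pp.2 rr.2 (expE m) := by
    intro m
    simp only [wt, sig, expE]
    ring
  have hL12 : wt ((N : ℤ) * pp.1 + pp.2) ((N : ℤ) * rr.1 + rr.2) m2 =
      wt ((N : ℤ) * pp.1 + pp.2) ((N : ℤ) * rr.1 + rr.2) m1 := by
    rw [hwL, hwL, hσm1, hτm1, hσm2, hτm2]; ring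
  have hLlow : ∀ m ∈ f.support, wt ((N : ℤ) * pp.1 + pp.2) ((N : ℤ) * rr.1 + rr.2) m1 ≤
      wt ((N : ℤ) * pp.1 + pp.2) ((N : ℤ) * rr.1 + rr.2) m := by
    intro m hm
    obtain ⟨hs0, hsM, ht0, htN⟩ := hST m hm
    rw [hwL, hwL, hσm1, hτm1]
    by_cases h0 : sig pp.1 rr.1 (expE m) = sig pp.1 rr.1 w
    · have := hzero1 m hm h0
      subst this
      rw [hσm2, hτm2]
      apply le_of_eq
      ring
    · have hp1' : (0:ℤ) ≤ (N : ℤ) * (sig pp.1 rr.1 (expE m) - sig pp.1 rr.1 w - 1) :=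
        mul_nonneg (by positivity) (by omega)
      linarith [hp1', ht0]
  have hLface : ∀ m ∈ f.support,
      wt ((N : ℤ) * pp.1 + pp.2) ((N : ℤ) * rr.1 + rr.2) m =
      wt ((N : ℤ) * pp.1 + pp.2) ((N : ℤ) * rr.1 + rr.2) m1 → m = m1 ∨ m = m2 := by
    intro m hm hmL
    obtain ⟨hs0, hsM, ht0, htN⟩ := hST m hm
    rw [hwL, hwL, hσm1, hτm1] at hmL
    by_cases h0 : sig pp.1 rr.1 (expE m) = sig pp.1 rr.1 w
    · exact Or.inr (hzero1 m hm h0)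
    · left
      have hs1 : sig pp.1 rr.1 w + 1 ≤ sig pp.1 rr.1 (expE m) := by omega
      have e1 : (N:ℤ) * (sig pp.1 rr.1 (expE m) - sig pp.1 rr.1 w - 1) +
          (sig pp.2 rr.2 (expE m) - sig pp.2 rr.2 w) = 0 := by
        linear_combination hmL
      have hpn : (0:ℤ) ≤ (N : ℤ) * (sig pp.1 rr.1 (expE m) - sig pp.1 rr.1 w - 1) :=
        mul_nonneg (by positivity) (by omega)
      have hτeq : sig pp.2 rr.2 (expE m) = sig pp.2 rr.2 w := by linarith
      have hP0 : (N:ℤ) * (sig pp.1 rr.1 (expE m) - sig pp.1 rr.1 w - 1) = 0 := by linarith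
      have hσeq : sig pp.1 rr.1 (expE m) = sig pp.1 rr.1 w + 1 := by
        rcases mul_eq_zero.1 hP0 with h | h
        · exfalso; have : (0:ℤ) < (N:ℤ) := by positivity
          omega
        · omega
      exact hone m hm hσeq hτeq
  constructor
  · -- f is not a unit
    intro hUf
    obtain ⟨g, hfg⟩ := isUnit_iff_exists_inv.1 hUf
    have hg0 : g ≠ 0 := by
      intro h; rw [h, mul_zero] at hfg; exact one_ne_zero hfg.symm
    obtain ⟨Mf, hMfs, hMfmin⟩ := exists_wt_min pp.1 rr.1 hf0
    obtain ⟨Mg, hMgs, hMgmin⟩ := exists_wt_min pp.1 rr.1 hg0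
    obtain ⟨Xf, hXfs, hXfmin⟩ := exists_wt_min (-pp.1) (-rr.1) hf0
    obtain ⟨Xg, hXgs, hXgmin⟩ := exists_wt_min (-pp.1) (-rr.1) hg0
    obtain ⟨ma, hmas, hmav⟩ := exists_wt_min_mul hMfs hMfmin hMgs hMgmin
    obtain ⟨mb, hmbs, hmbv⟩ := exists_wt_min_mul hXfs hXfmin hXgs hXgmin
    rw [hfg] at hmas hmbs
    have hma0 : ma = 0 := by
      rcases eq_or_ne ma 0 with h4 | h4
      · exact h4
      · exfalso
        rw [mem_support_iff] at hmas
        apply hmas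
        simp [coeff_one, h4, Ne.symm h4]
    have hmb0 : mb = 0 := by
      rcases eq_or_ne mb 0 with h4 | h4
      · exact h4
      · exfalso
        rw [mem_support_iff] at hmbs
        apply hmbs
        simp [coeff_one, h4, Ne.symm h4]
    rw [hma0, wt_zero] at hmav
    rw [hmb0, wt_zero, wt_neg, wt_neg] at hmbv
    have l1 := hMfmin m2 hm2s
    have l2 := hXfmin m1 hm1s
    rw [wt_neg, wt_neg] at l2
    have l3 := hMgmin Xg hXgs
    have e2 : wt pp.1 rr.1 m2 = sig pp.1 rr.1 w := by rw [wt_sig, hσm2]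
    have e1 : wt pp.1 rr.1 m1 = sig pp.1 rr.1 w + 1 := by rw [wt_sig, hσm1]
    have l3' := hXgmin Mg hMgs
    rw [wt_neg, wt_neg] at l3'
    omega
  · -- factorization
    rintro g h hfgh
    by_contra hcon
    push_neg at hcon
    obtain ⟨hgU, hhU⟩ := hcon
    have hg0 : g ≠ 0 := by
      rintro rfl; rw [zero_mul] at hfgh; exact hf0 hfgh
    have hh0 : h ≠ 0 := by
      rintro rfl; rw [mul_zero] at hfgh; exact hf0 hfgh
    -- Step B: if the second factor has τ-spread at least N, the first factor is a unit
    have stepB : ∀ g' h' : MvPolynomial (Fin 2) k, f = g' * h' → g' ≠ 0 → h' ≠ 0 →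
        (∃ n1 ∈ h'.support, ∃ n2 ∈ h'.support,
          wt pp.2 rr.2 n2 = wt pp.2 rr.2 n1 + (N : ℤ)) → IsUnit g' := by
      rintro g' h' hf' hg'0 hh'0 ⟨n1, hn1, n2, hn2, hdiff⟩
      obtain ⟨Tg, hTgs, hTgmin⟩ := exists_wt_min pp.2 rr.2 hg'0
      obtain ⟨Th, hThs, hThmin⟩ := exists_wt_min pp.2 rr.2 hh'0
      obtain ⟨Ug, hUgs, hUgmin⟩ := exists_wt_min (-pp.2) (-rr.2) hg'0
      obtain ⟨Uh, hUhs, hUhmin⟩ := exists_wt_min (-pp.2) (-rr.2) hh'0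
      have hUgmax : ∀ n ∈ g'.support, wt pp.2 rr.2 n ≤ wt pp.2 rr.2 Ug := by
        intro n hn; have h3 := hUgmin n hn; rw [wt_neg, wt_neg] at h3; omega
      have hUhmax : ∀ n ∈ h'.support, wt pp.2 rr.2 n ≤ wt pp.2 rr.2 Uh := by
        intro n hn; have h3 := hUhmin n hn; rw [wt_neg, wt_neg] at h3; omega
      obtain ⟨ma, hmas, hmav⟩ := exists_wt_min_mul hUgs hUgmin hUhs hUhmin
      rw [← hf'] at hmas
      rw [wt_neg, wt_neg, wt_neg] at hmav
      obtain ⟨mb, hmbs, hmbv⟩ := exists_wt_min_mul hTgs hTgmin hThs hThmin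
      rw [← hf'] at hmbs
      have hba := (hST ma hmas).2.2.2
      have hbb := (hST mb hmbs).2.2.1
      rw [← wt_sig] at hba hbb
      have hm2f : m2 ∈ (g' * h').support := by rw [← hf']; exact hm2s
      have htop := wt_mul_lower hUgmin hUhmin m2 hm2f
      rw [wt_neg, wt_neg, wt_neg] at htop
      have hwm2 : wt pp.2 rr.2 m2 = sig pp.2 rr.2 w + (N : ℤ) := by rw [wt_sig, hτm2]
      have l1 := hThmin n1 hn1
      have l2 := hUhmax n2 hn2
      have l3 := hTgmin Ug hUgs
      have hflat : ∀ n ∈ g'.support, wt (-pp.2) (-rr.2) n = wt (-pp.2) (-rr.2) Ug := by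
        intro n hn
        have h4 := hTgmin n hn
        have h5 := hUgmax n hn
        rw [wt_neg, wt_neg]
        omega
      have hmul := faceAt_mul hUgmin hUhmin
      rw [← hf'] at hmul
      have hgface : faceAt (-pp.2) (-rr.2) (wt (-pp.2) (-rr.2) Ug) g' = g' :=
        faceAt_eq_self hflat
      have hlevel : wt (-pp.2) (-rr.2) Ug + wt (-pp.2) (-rr.2) Uh
          = -(sig pp.2 rr.2 w + (N : ℤ)) := by
        rw [wt_neg, wt_neg]; omega
      rw [hlevel, hgface] at hmul
      have hfface : faceAt (-pp.2) (-rr.2) (-(sig pp.2 rr.2 w + (N : ℤ))) f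
          = monomial m2 (coeff m2 f) := by
        ext n
        rw [coeff_faceAt, coeff_monomial]
        by_cases hn : wt (-pp.2) (-rr.2) n = -(sig pp.2 rr.2 w + (N : ℤ))
        · rw [if_pos hn]
          rw [wt_neg] at hn
          by_cases hns : n ∈ f.support
          · have hn2' : n = m2 := by
              apply hzero2 n hns
              rw [← wt_sig]
              omega
            rw [hn2', if_pos rfl]
          · rw [mem_support_iff, not_not] at hns
            rw [hns, if_neg (fun e => hm2c (by rw [e]; exact hns))]
        · rw [if_neg hn, if_neg (fun e => hn (by rw [← e, wt_neg, hwm2]))]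
      rw [hfface] at hmul
      set h2 := faceAt (-pp.2) (-rr.2) (wt (-pp.2) (-rr.2) Uh) h' with hh2def
      have hh20 : h2 ≠ 0 := faceAt_ne_zero hUhs rfl
      have hg'supp : ∀ n ∈ (g' * h2).support, n = m2 := by
        intro n hn
        rw [← hmul, mem_support_iff, coeff_monomial] at hn
        by_contra hne
        rw [if_neg (fun e => hne e.symm)] at hn
        exact hn rfl
      obtain ⟨Ag, hAgs, hAgmin⟩ := exists_wt_min pp.1 rr.1 hg'0
      obtain ⟨Bg, hBgs, hBgmin⟩ := exists_wt_min (-pp.1) (-rr.1) hg'0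
      obtain ⟨Ah, hAhs, hAhmin⟩ := exists_wt_min pp.1 rr.1 hh20
      obtain ⟨Bh, hBhs, hBhmin⟩ := exists_wt_min (-pp.1) (-rr.1) hh20
      obtain ⟨mc, hmcs, hmcv⟩ := exists_wt_min_mul hAgs hAgmin hAhs hAhmin
      obtain ⟨md, hmds, hmdv⟩ := exists_wt_min_mul hBgs hBgmin hBhs hBhmin
      have hmc2 := hg'supp mc hmcs
      have hmd2 := hg'supp md hmds
      rw [hmc2] at hmcv
      rw [hmd2, wt_neg, wt_neg, wt_neg] at hmdv
      have hσflatg : ∀ n ∈ g'.support, wt pp.1 rr.1 n = wt pp.1 rr.1 Ag := by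
        intro n hn
        have h4 := hAgmin n hn
        have h5 := hBgmin n hn
        rw [wt_neg, wt_neg] at h5
        have h6 := hAgmin Bg hBgs
        have h7 := hAhmin Bh hBhs
        omega
      have hτflatg : ∀ n ∈ g'.support, wt pp.2 rr.2 n = wt pp.2 rr.2 Tg := by
        intro n hn
        have h4 := hTgmin n hn
        have h5 := hUgmax n hn
        omega
      have hsingle : ∀ n ∈ g'.support, n = Tg := by
        intro n hn
        apply expE_inj
        apply hinj
        · rw [← wt_sig, ← wt_sig, hσflatg n hn, hσflatg Tg hTgs]
        · rw [← wt_sig, ← wt_sig, hτflatg n hn]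
      have hgmono : g' = monomial Tg (coeff Tg g') := by
        ext n
        rw [coeff_monomial]
        by_cases hn : n ∈ g'.support
        · rw [hsingle n hn, if_pos rfl]
        · rw [mem_support_iff, not_not] at hn
          rw [hn, if_neg (fun e => (mem_support_iff.1 hTgs) (by rw [e]; exact hn))]
      have hTg0 : Tg = 0 := by
        by_contra hne
        have h01 : Tg 0 ≠ 0 ∨ Tg 1 ≠ 0 := by
          by_contra hcc
          push_neg at hcc
          apply hne
          ext i
          fin_cases i
          · simpa using hcc.1
          · simpa using hcc.2
        obtain ⟨c0, hc0⟩ : ∃ c0, coeff Tg g' = c0 := ⟨_, rfl⟩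
        have hdecomp : g' = X 0 ^ (Tg 0) * (X 1 ^ (Tg 1) * C c0) := by
          rw [hgmono, hc0, monomial_fin2]
        have hdvdf : g' ∣ f := ⟨h', hf'⟩
        rcases h01 with h0 | h0
        · have hX : X (0 : Fin 2) ∣ g' := by
            rw [hdecomp]; exact dvd_mul_of_dvd_left (dvd_pow_self _ h0) _
          exact hx (hX.trans hdvdf)
        · have hX : X (1 : Fin 2) ∣ g' := by
            rw [hdecomp]; exact dvd_mul_of_dvd_right (dvd_mul_of_dvd_left (dvd_pow_self _ h0) _) _
          exact hy (hX.trans hdvdf)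
      have hcg : coeff Tg g' ≠ 0 := mem_support_iff.1 hTgs
      rw [hgmono, hTg0, monomial_zero']
      rw [hTg0] at hcg
      exact (isUnit_iff_ne_zero.2 hcg).map C
    -- Step A: minimal wL face analysis
    obtain ⟨Lg, hLgs, hLgmin⟩ := exists_wt_min ((N:ℤ)*pp.1+pp.2) ((N:ℤ)*rr.1+rr.2) hg0
    obtain ⟨Lh, hLhs, hLhmin⟩ := exists_wt_min ((N:ℤ)*pp.1+pp.2) ((N:ℤ)*rr.1+rr.2) hh0
    obtain ⟨m0, hm0s, hm0v⟩ := exists_wt_min_mul hLgs hLgmin hLhs hLhmin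
    rw [← hfgh] at hm0s
    have hm1f : m1 ∈ (g*h).support := by rw [← hfgh]; exact hm1s
    have hlow1 := wt_mul_lower hLgmin hLhmin m1 hm1f
    have hsum : wt ((N:ℤ)*pp.1+pp.2) ((N:ℤ)*rr.1+rr.2) Lg +
        wt ((N:ℤ)*pp.1+pp.2) ((N:ℤ)*rr.1+rr.2) Lh =
        wt ((N:ℤ)*pp.1+pp.2) ((N:ℤ)*rr.1+rr.2) m1 := by
      have h4 := hLlow m0 hm0s
      omega
    have hface := faceAt_mul hLgmin hLhmin
    rw [← hfgh, hsum] at hface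
    have hfaceval : faceAt ((N:ℤ)*pp.1+pp.2) ((N:ℤ)*rr.1+rr.2)
        (wt ((N:ℤ)*pp.1+pp.2) ((N:ℤ)*rr.1+rr.2) m1) f =
        monomial m1 (coeff m1 f) + monomial m2 (coeff m2 f) := by
      ext n
      rw [coeff_faceAt, coeff_add, coeff_monomial, coeff_monomial]
      by_cases hn : wt ((N:ℤ)*pp.1+pp.2) ((N:ℤ)*rr.1+rr.2) n =
          wt ((N:ℤ)*pp.1+pp.2) ((N:ℤ)*rr.1+rr.2) m1
      · rw [if_pos hn]
        by_cases hns : n ∈ f.support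
        · rcases hLface n hns hn with h4 | h4
          · rw [h4, if_pos rfl, if_neg hm12', add_zero]
          · rw [h4, if_neg hm12, if_pos rfl, zero_add]
        · rw [mem_support_iff, not_not] at hns
          rw [hns, if_neg (fun e => hm1c (by rw [e]; exact hns)),
            if_neg (fun e => hm2c (by rw [e]; exact hns)), add_zero]
      · rw [if_neg hn, if_neg (fun e => hn (by rw [← e])),
          if_neg (fun e => hn (by rw [← e]; exact hL12)), add_zero]
    rw [hfaceval] at hface
    set G := faceAt ((N:ℤ)*pp.1+pp.2) ((N:ℤ)*rr.1+rr.2)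
        (wt ((N:ℤ)*pp.1+pp.2) ((N:ℤ)*rr.1+rr.2) Lg) g with hGdef
    set H := faceAt ((N:ℤ)*pp.1+pp.2) ((N:ℤ)*rr.1+rr.2)
        (wt ((N:ℤ)*pp.1+pp.2) ((N:ℤ)*rr.1+rr.2) Lh) h with hHdef
    have hG0 : G ≠ 0 := faceAt_ne_zero hLgs rfl
    have hH0 : H ≠ 0 := faceAt_ne_zero hLhs rfl
    have hGH : ∀ n ∈ (G * H).support, n = m1 ∨ n = m2 := by
      intro n hn
      rw [← hface, mem_support_iff, coeff_add, coeff_monomial, coeff_monomial] at hn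
      by_contra hne
      push_neg at hne
      rw [if_neg (fun e => hne.1 e.symm), if_neg (fun e => hne.2 e.symm), add_zero] at hn
      exact hn rfl
    have hm1GH : m1 ∈ (G * H).support := by
      rw [← hface, mem_support_iff, coeff_add, coeff_monomial, coeff_monomial,
        if_pos rfl, if_neg hm12', add_zero]
      exact hm1c
    have hm2GH : m2 ∈ (G * H).support := by
      rw [← hface, mem_support_iff, coeff_add, coeff_monomial, coeff_monomial,
        if_neg hm12, if_pos rfl, zero_add]
      exact hm2c
    obtain ⟨Ag, hAgs, hAgmin⟩ := exists_wt_min pp.1 rr.1 hG0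
    obtain ⟨Bg, hBgs, hBgmin⟩ := exists_wt_min (-pp.1) (-rr.1) hG0
    obtain ⟨Ah, hAhs, hAhmin⟩ := exists_wt_min pp.1 rr.1 hH0
    obtain ⟨Bh, hBhs, hBhmin⟩ := exists_wt_min (-pp.1) (-rr.1) hH0
    obtain ⟨mc, hmcs, hmcv⟩ := exists_wt_min_mul hAgs hAgmin hAhs hAhmin
    obtain ⟨md, hmds, hmdv⟩ := exists_wt_min_mul hBgs hBgmin hBhs hBhmin
    rw [wt_neg, wt_neg, wt_neg] at hmdv
    have hσwm1 : wt pp.1 rr.1 m1 = sig pp.1 rr.1 w + 1 := by rw [wt_sig, hσm1]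
    have hσwm2 : wt pp.1 rr.1 m2 = sig pp.1 rr.1 w := by rw [wt_sig, hσm2]
    have hτwm1 : wt pp.2 rr.2 m1 = sig pp.2 rr.2 w := by rw [wt_sig, hτm1]
    have hτwm2 : wt pp.2 rr.2 m2 = sig pp.2 rr.2 w + (N:ℤ) := by rw [wt_sig, hτm2]
    have hlo := wt_mul_lower hAgmin hAhmin m2 hm2GH
    have hhi := wt_mul_lower hBgmin hBhmin m1 hm1GH
    rw [wt_neg, wt_neg, wt_neg] at hhi
    have hc6 := hAgmin Bg hBgs
    have hc7 := hAhmin Bh hBhs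
    have hmcval : wt pp.1 rr.1 mc = sig pp.1 rr.1 w ∨
        wt pp.1 rr.1 mc = sig pp.1 rr.1 w + 1 := by
      rcases hGH mc hmcs with h4 | h4 <;> rw [h4]
      · right; exact hσwm1
      · left; exact hσwm2
    have hmdval : wt pp.1 rr.1 md = sig pp.1 rr.1 w ∨
        wt pp.1 rr.1 md = sig pp.1 rr.1 w + 1 := by
      rcases hGH md hmds with h4 | h4 <;> rw [h4]
      · right; exact hσwm1
      · left; exact hσwm2
    have hcoefm1 : coeff m1 (G * H) ≠ 0 := mem_support_iff.1 hm1GH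
    have hcoefm2 : coeff m2 (G * H) ≠ 0 := mem_support_iff.1 hm2GH
    rw [coeff_mul] at hcoefm1 hcoefm2
    obtain ⟨xx, hxmem, hx0⟩ := Finset.exists_ne_zero_of_sum_ne_zero hcoefm1
    obtain ⟨yy, hymem, hy0⟩ := Finset.exists_ne_zero_of_sum_ne_zero hcoefm2
    rw [Finset.HasAntidiagonal.mem_antidiagonal] at hxmem hymem
    have hx1G : xx.1 ∈ G.support := mem_support_iff.2 (fun e => hx0 (by rw [e, zero_mul]))
    have hx2H : xx.2 ∈ H.support := mem_support_iff.2 (fun e => hx0 (by rw [e, mul_zero]))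
    have hy1G : yy.1 ∈ G.support := mem_support_iff.2 (fun e => hy0 (by rw [e, zero_mul]))
    have hy2H : yy.2 ∈ H.support := mem_support_iff.2 (fun e => hy0 (by rw [e, mul_zero]))
    obtain ⟨hx1g, hx1L⟩ := mem_support_faceAt (hGdef ▸ hx1G)
    obtain ⟨hx2h, hx2L⟩ := mem_support_faceAt (hHdef ▸ hx2H)
    obtain ⟨hy1g, hy1L⟩ := mem_support_faceAt (hGdef ▸ hy1G)
    obtain ⟨hy2h, hy2L⟩ := mem_support_faceAt (hHdef ▸ hy2H)
    have hτx : wt pp.2 rr.2 xx.1 + wt pp.2 rr.2 xx.2 = wt pp.2 rr.2 m1 := by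
      rw [← wt_add, hxmem]
    have hτy : wt pp.2 rr.2 yy.1 + wt pp.2 rr.2 yy.2 = wt pp.2 rr.2 m2 := by
      rw [← wt_add, hymem]
    by_cases hflatG : wt pp.1 rr.1 Bg = wt pp.1 rr.1 Ag
    · have hx1σ : wt pp.1 rr.1 xx.1 = wt pp.1 rr.1 Ag := by
        have h4 := hAgmin xx.1 hx1G
        have h5 := hBgmin xx.1 hx1G
        rw [wt_neg, wt_neg] at h5
        omega
      have hy1σ : wt pp.1 rr.1 yy.1 = wt pp.1 rr.1 Ag := by
        have h4 := hAgmin yy.1 hy1G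
        have h5 := hBgmin yy.1 hy1G
        rw [wt_neg, wt_neg] at h5
        omega
      have hσeq : sig pp.1 rr.1 (expE xx.1) = sig pp.1 rr.1 (expE yy.1) := by
        rw [← wt_sig, ← wt_sig, hx1σ, hy1σ]
      have hτeq : sig pp.2 rr.2 (expE xx.1) = sig pp.2 rr.2 (expE yy.1) := by
        have e1 := hwL xx.1
        have e2 := hwL yy.1
        rw [hx1L] at e1
        rw [hy1L] at e2
        have e3 : (N:ℤ) * sig pp.1 rr.1 (expE xx.1) + sig pp.2 rr.2 (expE xx.1)
            = (N:ℤ) * sig pp.1 rr.1 (expE yy.1) + sig pp.2 rr.2 (expE yy.1) := by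
          linear_combination e2 - e1
        linear_combination e3 - (N:ℤ) * hσeq
      have hxy1 : xx.1 = yy.1 := expE_inj (hinj _ _ hσeq hτeq)
      have hτdiff : wt pp.2 rr.2 yy.2 = wt pp.2 rr.2 xx.2 + (N:ℤ) := by
        rw [hxy1] at hτx
        omega
      exact absurd (stepB g h hfgh hg0 hh0 ⟨xx.2, hx2h, yy.2, hy2h, hτdiff⟩) hgU
    · have hflatH : wt pp.1 rr.1 Bh = wt pp.1 rr.1 Ah := by
        omega
      have hx2σ : wt pp.1 rr.1 xx.2 = wt pp.1 rr.1 Ah := by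
        have h4 := hAhmin xx.2 hx2H
        have h5 := hBhmin xx.2 hx2H
        rw [wt_neg, wt_neg] at h5
        omega
      have hy2σ : wt pp.1 rr.1 yy.2 = wt pp.1 rr.1 Ah := by
        have h4 := hAhmin yy.2 hy2H
        have h5 := hBhmin yy.2 hy2H
        rw [wt_neg, wt_neg] at h5
        omega
      have hσeq : sig pp.1 rr.1 (expE xx.2) = sig pp.1 rr.1 (expE yy.2) := by
        rw [← wt_sig, ← wt_sig, hx2σ, hy2σ]
      have hτeq : sig pp.2 rr.2 (expE xx.2) = sig pp.2 rr.2 (expE yy.2) := by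
        have e1 := hwL xx.2
        have e2 := hwL yy.2
        rw [hx2L] at e1
        rw [hy2L] at e2
        have e3 : (N:ℤ) * sig pp.1 rr.1 (expE xx.2) + sig pp.2 rr.2 (expE xx.2)
            = (N:ℤ) * sig pp.1 rr.1 (expE yy.2) + sig pp.2 rr.2 (expE yy.2) := by
          linear_combination e2 - e1
        linear_combination e3 - (N:ℤ) * hσeq
      have hxy2 : xx.2 = yy.2 := expE_inj (hinj _ _ hσeq hτeq)
      have hτdiff : wt pp.2 rr.2 yy.1 = wt pp.2 rr.2 xx.1 + (N:ℤ) := by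
        rw [hxy2] at hτx
        omega
      exact absurd (stepB h g (by rw [hfgh, mul_comm]) hh0 hg0
        ⟨xx.1, hx1g, yy.1, hy1g, hτdiff⟩) hhU
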